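/- Let μ be the Haar probability measure on the compact topological group ℕ → ZMod 2 (equivalently, the fair-coin product measure on Cantor space), and let G₁ be the graph on this space in which distinct x, y are adjacent iff x(n) = y(n) for all but finitely many n. Then every μ-measurable G₁-independent set is μ-null. Consequently, G₁ admits no proper coloring with countably many colors in which every color class is μ-measurable; in particular the Lebesgue-measurable chromatic number of G₁ is uncountable. -/

import Mathlib

open MeasureTheory

/-- Adjacency in the graph `G₁` on `ℕ → ZMod 2`: distinct points are adjacent
iff they differ in only finitely many coordinates. -/
def G1Adj (x y : ℕ → ZMod 2) : Prop :=
  x ≠ y ∧ {n | x n ≠ y n}.Finite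

/-- With respect to the Haar probability measure on the compact group
`ℕ → ZMod 2`, every measurable `G₁`-independent set is null; consequently
`G₁` admits no proper colouring with countably many measurable colour
classes, i.e. its measurable chromatic number is uncountable. -/
theorem G1_independent_null_and_measurable_chromatic_uncountable
    (μ : Measure (ℕ → ZMod 2)) [IsProbabilityMeasure μ]
    [μ.IsAddHaarMeasure] :
    (∀ A : Set (ℕ → ZMod 2), NullMeasurableSet A μ →
      (∀ x ∈ A, ∀ y ∈ A, ¬G1Adj x y) → μ A = 0) ∧
    ¬∃ c : (ℕ → ZMod 2) → ℕ, (∀ x y, G1Adj x y → c x ≠ c y) ∧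
        ∀ n, NullMeasurableSet (c ⁻¹' {n}) μ := by
  have key : ∀ A : Set (ℕ → ZMod 2), NullMeasurableSet A μ →
      (∀ x ∈ A, ∀ y ∈ A, ¬G1Adj x y) → μ A = 0 := by
    intro A hA hind
    by_contra h0
    set e : Finset ℕ → (ℕ → ZMod 2) := fun s n => if n ∈ s then 1 else 0 with he
    have einj : Function.Injective e := by
      intro s t hst
      ext n
      have := congrFun hst n
      by_cases hs : n ∈ s <;> by_cases ht : n ∈ t <;>
        simp [he, hs, ht] at this ⊢
    -- translates
    set f : Finset ℕ → Set (ℕ → ZMod 2) := fun s => (fun x => e s + x) ⁻¹' A with hf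
    have hmp : ∀ s : Finset ℕ, MeasurePreserving (fun x => e s + x) μ μ :=
      fun s => measurePreserving_add_left μ (e s)
    have hfm : ∀ s, NullMeasurableSet (f s) μ := fun s =>
      hA.preimage (hmp s).quasiMeasurePreserving
    have hfeq : ∀ s, μ (f s) = μ A := fun s => measure_preimage_add μ (e s) A
    have hdisj : Pairwise (Function.onFun (AEDisjoint μ) f) := by
      intro s t hst
      refine Disjoint.aedisjoint ?_
      rw [Set.disjoint_left]
      intro x hx hx'
      refine hind _ hx _ hx' ?_
      constructor
      · intro h
        exact hst (einj (add_right_cancel h))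
      · apply Set.Finite.subset (s ∪ t).finite_toSet
        intro n hn
        simp only [Set.mem_setOf_eq, Pi.add_apply] at hn
        by_contra hmem
        simp only [Finset.coe_union, Set.mem_union, Finset.mem_coe] at hmem
        push_neg at hmem
        simp [he, hmem.1, hmem.2] at hn
    have htot : ∑' _ : Finset ℕ, μ A ≤ 1 := by
      calc ∑' s : Finset ℕ, μ A = ∑' s, μ (f s) := by simp_rw [hfeq]
        _ = μ (⋃ s, f s) := (measure_iUnion₀ hdisj hfm).symm
        _ ≤ 1 := prob_le_one
    rw [ENNReal.tsum_const_eq_top_of_ne_zero h0] at htot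
    exact (by norm_num : ¬ (⊤ : ENNReal) ≤ 1) htot
  refine ⟨key, ?_⟩
  rintro ⟨c, hc, hm⟩
  have hnull : ∀ n, μ (c ⁻¹' {n}) = 0 := by
    intro n
    refine key _ (hm n) ?_
    intro x hx y hy hadj
    exact hc x y hadj (hx.trans hy.symm)
  have : μ Set.univ = 0 := by
    have : Set.univ = ⋃ n, c ⁻¹' {n} := by
      ext x; simp
    rw [this]
    exact le_antisymm ((measure_iUnion_le _).trans (by simp [hnull])) zero_le
  simp [measure_univ] at this
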